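/- Let E be a finite-dimensional real vector space with two inner product norms that are C-Lipschitz-equivalent. Then the induced angular distances on the sphere S(E) (α_N(x,y) = arccos(⟨x,y⟩_N / (‖x‖_N ‖y‖_N))) are C²-Lipschitz-equivalent: for all nonzero x, y, α_{N'}(x,y) ≤ C² α_N(x,y). -/

import Mathlib

noncomputable section
set_option maxHeartbeats 1000000

open Real InnerProductGeometry Filter

section Helpers

variable {V : Type*} [NormedAddCommGroup V] [InnerProductSpace ℝ V]

local notation "⟪" x ", " y "⟫" => @inner ℝ _ _ x y

private lemma aux_angle_triangle_unit {x y z : V} (hx : ‖x‖ = 1) (hy : ‖y‖ = 1)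
    (hz : ‖z‖ = 1) : angle x z ≤ angle x y + angle y z := by
  by_cases hab : π ≤ angle x y + angle y z
  · exact (angle_le_pi x z).trans hab
  push_neg at hab
  have hxx : ⟪x, x⟫ = 1 := by rw [real_inner_self_eq_norm_mul_norm, hx]; ring
  have hyy : ⟪y, y⟫ = 1 := by rw [real_inner_self_eq_norm_mul_norm, hy]; ring
  have hzz : ⟪z, z⟫ = 1 := by rw [real_inner_self_eq_norm_mul_norm, hz]; ring
  set a := angle x y with ha
  set b := angle y z with hb
  have hcosa : Real.cos a = ⟪x, y⟫ := by rw [ha, cos_angle, hx, hy]; simp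
  have hcosb : Real.cos b = ⟪y, z⟫ := by rw [hb, cos_angle, hy, hz]; simp
  have hsina : Real.sin a = √(1 - ⟪x, y⟫ * ⟪x, y⟫) := by
    have := sin_angle_mul_norm_mul_norm x y
    rw [hx, hy, hxx, hyy] at this; simpa using this
  have hsinb : Real.sin b = √(1 - ⟪y, z⟫ * ⟪y, z⟫) := by
    have := sin_angle_mul_norm_mul_norm y z
    rw [hy, hz, hyy, hzz] at this; simpa using this
  set P := x - ⟪x, y⟫ • y with hP
  set Q := z - ⟪y, z⟫ • y with hQ
  have hPP : ⟪P, P⟫ = 1 - ⟪x, y⟫ * ⟪x, y⟫ := by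
    simp only [hP, inner_sub_left, inner_sub_right, real_inner_smul_left, real_inner_smul_right,
      hxx, hyy]
    rw [real_inner_comm y x]; ring
  have hQQ : ⟪Q, Q⟫ = 1 - ⟪y, z⟫ * ⟪y, z⟫ := by
    simp only [hQ, inner_sub_left, inner_sub_right, real_inner_smul_left, real_inner_smul_right,
      hyy, hzz]
    rw [real_inner_comm z y]; ring
  have hPQ : ⟪P, Q⟫ = ⟪x, z⟫ - ⟪x, y⟫ * ⟪y, z⟫ := by
    simp only [hP, hQ, inner_sub_left, inner_sub_right, real_inner_smul_left,
      real_inner_smul_right, hyy]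
    rw [real_inner_comm y x, real_inner_comm z y]; ring
  have hnP : ‖P‖ = √(1 - ⟪x, y⟫ * ⟪x, y⟫) := by rw [norm_eq_sqrt_real_inner, hPP]
  have hnQ : ‖Q‖ = √(1 - ⟪y, z⟫ * ⟪y, z⟫) := by rw [norm_eq_sqrt_real_inner, hQQ]
  have hCS : -(‖P‖ * ‖Q‖) ≤ ⟪P, Q⟫ := neg_le_of_neg_le (by
    have := abs_real_inner_le_norm P Q
    have := neg_abs_le (⟪P, Q⟫); linarith)
  have hkey : Real.cos (a + b) ≤ ⟪x, z⟫ := by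
    rw [Real.cos_add, hcosa, hcosb, hsina, hsinb, ← hnP, ← hnQ]
    have := hCS
    rw [hPQ] at this; linarith
  have hxz1 : ⟪x, z⟫ ≤ 1 := by
    have := real_inner_le_norm x z
    rw [hx, hz] at this; linarith
  have hax : angle x z = Real.arccos ⟪x, z⟫ := by
    unfold angle; rw [hx, hz]; norm_num
  have h0ab : 0 ≤ a + b := add_nonneg (angle_nonneg x y) (angle_nonneg y z)
  rw [hax]
  calc Real.arccos ⟪x, z⟫ ≤ Real.arccos (Real.cos (a + b)) := by
        rw [Real.arccos_eq_pi_div_two_sub_arcsin, Real.arccos_eq_pi_div_two_sub_arcsin]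
        have := Real.monotone_arcsin hkey
        linarith
    _ = a + b := Real.arccos_cos h0ab hab.le

private lemma aux_angle_triangle (x y z : V) : angle x z ≤ angle x y + angle y z := by
  by_cases hy : y = 0
  · subst hy
    rw [angle_zero_left, angle_zero_right]
    have := angle_le_pi x z; linarith
  by_cases hx : x = 0
  · subst hx
    rw [angle_zero_left, angle_zero_left]
    have := angle_nonneg y z; linarith
  by_cases hz : z = 0
  · subst hz
    rw [angle_zero_right, angle_zero_right]
    have := angle_nonneg x y; linarith
  have hxn : (0:ℝ) < ‖x‖⁻¹ := inv_pos.2 (norm_pos_iff.2 hx)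
  have hyn : (0:ℝ) < ‖y‖⁻¹ := inv_pos.2 (norm_pos_iff.2 hy)
  have hzn : (0:ℝ) < ‖z‖⁻¹ := inv_pos.2 (norm_pos_iff.2 hz)
  have e1 : angle x z = angle (‖x‖⁻¹ • x) (‖z‖⁻¹ • z) := by
    rw [angle_smul_left_of_pos _ _ hxn, angle_smul_right_of_pos _ _ hzn]
  have e2 : angle x y = angle (‖x‖⁻¹ • x) (‖y‖⁻¹ • y) := by
    rw [angle_smul_left_of_pos _ _ hxn, angle_smul_right_of_pos _ _ hyn]
  have e3 : angle y z = angle (‖y‖⁻¹ • y) (‖z‖⁻¹ • z) := by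
    rw [angle_smul_left_of_pos _ _ hyn, angle_smul_right_of_pos _ _ hzn]
  rw [e1, e2, e3]
  exact aux_angle_triangle_unit (norm_smul_inv_norm hx) (norm_smul_inv_norm hy)
    (norm_smul_inv_norm hz)

private lemma aux_angle_chain (q : ℕ → V) (h0 : q 0 ≠ 0) (n : ℕ) :
    angle (q 0) (q n) ≤ ∑ i ∈ Finset.range n, angle (q i) (q (i + 1)) := by
  induction n with
  | zero => simp [angle_self h0]
  | succ n ih =>
    rw [Finset.sum_range_succ]
    calc angle (q 0) (q (n + 1)) ≤ angle (q 0) (q n) + angle (q n) (q (n + 1)) :=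
          aux_angle_triangle _ _ _
      _ ≤ _ := by linarith

end Helpers

private lemma aux_arcsin_le_div {u : ℝ} (h0 : 0 ≤ u) (h1 : u < 1) :
    Real.arcsin u ≤ u / √(1 - u ^ 2) := by
  rcases eq_or_lt_of_le h0 with h | h
  · simp [← h]
  have ha0 : 0 < Real.arcsin u := Real.arcsin_pos.2 h
  have ha2 : Real.arcsin u < π / 2 := Real.arcsin_lt_pi_div_two.2 h1
  have := Real.lt_tan ha0 ha2
  rw [Real.tan_eq_sin_div_cos, Real.sin_arcsin (by linarith) h1.le, Real.cos_arcsin] at this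
  linarith

private lemma aux_bilin_nonneg {E : Type*} [AddCommGroup E] [Module ℝ E]
    (B : LinearMap.BilinForm ℝ E) (hBpos : ∀ x : E, x ≠ 0 → 0 < B x x) (z : E) :
    0 ≤ B z z := by
  by_cases hz : z = 0
  · simp [hz]
  · exact (hBpos z hz).le

private lemma aux_bilin_CS {E : Type*} [AddCommGroup E] [Module ℝ E]
    (B : LinearMap.BilinForm ℝ E) (hBsymm : ∀ x y, B x y = B y x)
    (hBpos : ∀ x : E, x ≠ 0 → 0 < B x x) (x y : E) :
    (B x y) ^ 2 ≤ B x x * B y y := by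
  by_cases hy : y = 0
  · simp [hy]
  have hyy : 0 < B y y := hBpos y hy
  have hz : 0 ≤ B (B y y • x - B x y • y) (B y y • x - B x y • y) :=
    aux_bilin_nonneg B hBpos _
  simp only [map_sub, map_smul, LinearMap.sub_apply, LinearMap.smul_apply, smul_eq_mul] at hz
  rw [hBsymm y x] at hz
  nlinarith [hz, hyy]
section Seg
variable {V : Type*} [NormedAddCommGroup V] [InnerProductSpace ℝ V]
local notation "⟪" x ", " y "⟫" => @inner ℝ _ _ x y

private lemma aux_seg {C : ℝ} (hC : 0 < C) (B : LinearMap.BilinForm ℝ V)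
    (h1 : ∀ x : V, C⁻¹ * √(B x x) ≤ ‖x‖) (h2 : ∀ x : V, ‖x‖ ≤ C * √(B x x))
    {p q : V} {θ : ℝ} (hθ0 : 0 ≤ θ) (hθπ : θ ≤ π)
    (hpp : B p p = 1) (hqq : B q q = 1) (hpq : B p q = Real.cos θ)
    (hBsymm : ∀ x y, B x y = B y x)
    (hsmall : C ^ 4 * (1 - Real.cos θ) < 1) :
    angle p q ≤ Real.arcsin (C ^ 2 * Real.sin θ) := by
  have hCi : 0 < C⁻¹ := inv_pos.2 hC
  have hqp : B q p = Real.cos θ := by rw [hBsymm]; exact hpq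
  have hsθ : 0 ≤ Real.sin θ := Real.sin_nonneg_of_nonneg_of_le_pi hθ0 hθπ
  have hcθ : Real.cos θ ≤ 1 := Real.cos_le_one θ
  -- norm bounds
  have hnp1 : C⁻¹ ≤ ‖p‖ := by have := h1 p; rw [hpp] at this; simpa using this
  have hnp2 : ‖p‖ ≤ C := by have := h2 p; rw [hpp] at this; simpa using this
  have hnq1 : C⁻¹ ≤ ‖q‖ := by have := h1 q; rw [hqq] at this; simpa using this
  have hnq2 : ‖q‖ ≤ C := by have := h2 q; rw [hqq] at this; simpa using this
  have hnp0 : 0 < ‖p‖ := lt_of_lt_of_le hCi hnp1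
  have hnq0 : 0 < ‖q‖ := lt_of_lt_of_le hCi hnq1
  -- B (p - q) (p - q) = 2 - 2 cos θ
  have hBd : B (p - q) (p - q) = 2 - 2 * Real.cos θ := by
    simp only [map_sub, LinearMap.sub_apply]
    rw [hpp, hqq, hpq, hqp]; ring
  have hd2 : ‖p - q‖ ^ 2 ≤ C ^ 2 * (2 - 2 * Real.cos θ) := by
    have hle : ‖p - q‖ ≤ C * √(2 - 2 * Real.cos θ) := by
      have := h2 (p - q); rwa [hBd] at this
    have h20 : (0:ℝ) ≤ 2 - 2 * Real.cos θ := by linarith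
    calc ‖p - q‖ ^ 2 ≤ (C * √(2 - 2 * Real.cos θ)) ^ 2 := by
          apply sq_le_sq' _ hle
          have : (0:ℝ) ≤ C * √(2 - 2 * Real.cos θ) := by positivity
          have := norm_nonneg (p - q); linarith
      _ = C ^ 2 * (2 - 2 * Real.cos θ) := by
          rw [mul_pow, Real.sq_sqrt h20]
  -- inner product is positive
  have hip : 0 < ⟪p, q⟫ := by
    have hns : ‖p - q‖ ^ 2 = ‖p‖ ^ 2 - 2 * ⟪p, q⟫ + ‖q‖ ^ 2 := norm_sub_sq_real p q
    have h1p : C⁻¹ ^ 2 ≤ ‖p‖ ^ 2 := by nlinarith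
    have h1q : C⁻¹ ^ 2 ≤ ‖q‖ ^ 2 := by nlinarith
    have hCC : C⁻¹ * C = 1 := inv_mul_cancel₀ hC.ne'
    nlinarith [hd2, hsmall, sq_nonneg C, sq_nonneg C⁻¹]
  -- angle < π/2
  have hangle2 : angle p q < π / 2 := by
    unfold angle
    exact Real.arccos_lt_pi_div_two.2 (div_pos hip (mul_pos hnp0 hnq0))
  -- sin angle bound
  have hsin : Real.sin (angle p q) ≤ C ^ 2 * Real.sin θ := by
    have hkey := sin_angle_mul_norm_mul_norm p q
    -- bound the Gram determinant
    have hBr : B (q - Real.cos θ • p) (q - Real.cos θ • p) = Real.sin θ ^ 2 := by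
      simp only [map_sub, map_smul, LinearMap.sub_apply, LinearMap.smul_apply, smul_eq_mul]
      rw [hpp, hqq, hpq, hqp]
      have := Real.sin_sq_add_cos_sq θ
      nlinarith
    have hr : ‖q - Real.cos θ • p‖ ≤ C * Real.sin θ := by
      have := h2 (q - Real.cos θ • p)
      rwa [hBr, Real.sqrt_sq hsθ] at this
    have hr2 : ‖q - Real.cos θ • p‖ ^ 2 ≤ (C * Real.sin θ) ^ 2 := by
      apply sq_le_sq' _ hr
      have : (0:ℝ) ≤ C * Real.sin θ := by positivity
      have := norm_nonneg (q - Real.cos θ • p); linarith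
    have hexp : ‖q - Real.cos θ • p‖ ^ 2
        = ‖q‖ ^ 2 - 2 * (Real.cos θ * ⟪q, p⟫) + Real.cos θ ^ 2 * ‖p‖ ^ 2 := by
      rw [norm_sub_sq_real, real_inner_smul_right, norm_smul, Real.norm_eq_abs, mul_pow, sq_abs]
    have hqp' : ⟪q, p⟫ = ⟪p, q⟫ := (real_inner_comm q p).symm
    have hpx : ⟪p, p⟫ = ‖p‖ ^ 2 := real_inner_self_eq_norm_sq p
    have hqx : ⟪q, q⟫ = ‖q‖ ^ 2 := real_inner_self_eq_norm_sq q
    have h5 : ‖q‖ ^ 2 - 2 * (Real.cos θ * ⟪q, p⟫) + Real.cos θ ^ 2 * ‖p‖ ^ 2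
        ≤ (C * Real.sin θ) ^ 2 := by
      linarith [hr2, hexp]
    rw [hqp'] at h5
    have h6 := mul_le_mul_of_nonneg_left h5 (sq_nonneg ‖p‖)
    have hG : ⟪p, p⟫ * ⟪q, q⟫ - ⟪p, q⟫ * ⟪p, q⟫ ≤ (‖p‖ * (C * Real.sin θ)) ^ 2 := by
      rw [hpx, hqx]
      nlinarith [h6, sq_nonneg (⟪p, q⟫ - Real.cos θ * ‖p‖ ^ 2)]
    have hsqrt : √(⟪p, p⟫ * ⟪q, q⟫ - ⟪p, q⟫ * ⟪p, q⟫) ≤ ‖p‖ * (C * Real.sin θ) := by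
      have h0 : (0:ℝ) ≤ ‖p‖ * (C * Real.sin θ) := by positivity
      calc √(⟪p, p⟫ * ⟪q, q⟫ - ⟪p, q⟫ * ⟪p, q⟫) ≤ √((‖p‖ * (C * Real.sin θ)) ^ 2) :=
            Real.sqrt_le_sqrt hG
        _ = ‖p‖ * (C * Real.sin θ) := Real.sqrt_sq h0
    rw [← hkey] at hsqrt
    -- divide out
    have hq' : C * Real.sin θ * ‖p‖ ≤ C ^ 2 * Real.sin θ * (‖p‖ * ‖q‖) := by
      have h8 : 1 ≤ C * ‖q‖ := by
        have := mul_le_mul_of_nonneg_left hnq1 hC.le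
        rwa [mul_inv_cancel₀ hC.ne'] at this
      have h9 := mul_le_mul_of_nonneg_left h8
        (show (0:ℝ) ≤ C * Real.sin θ * ‖p‖ by positivity)
      nlinarith [h9]
    have := hsqrt.trans (by linarith : ‖p‖ * (C * Real.sin θ) ≤ C ^ 2 * Real.sin θ * (‖p‖ * ‖q‖))
    calc Real.sin (angle p q)
        = Real.sin (angle p q) * (‖p‖ * ‖q‖) / (‖p‖ * ‖q‖) := by
          field_simp
      _ ≤ C ^ 2 * Real.sin θ := by
          rw [div_le_iff₀ (by positivity)]
          linarith
  -- conclude via arcsin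
  have := Real.arcsin_sin (x := angle p q) (by linarith [angle_nonneg p q, Real.pi_pos])
    hangle2.le
  rw [← this]
  exact Real.monotone_arcsin hsin

private lemma aux_main (B : LinearMap.BilinForm ℝ V) (hBsymm : ∀ x y, B x y = B y x)
    (hBpos : ∀ x : V, x ≠ 0 → 0 < B x x) (C : ℝ) (hC : 0 < C)
    (h1 : ∀ x : V, C⁻¹ * √(B x x) ≤ ‖x‖) (h2 : ∀ x : V, ‖x‖ ≤ C * √(B x x)) :
    ∀ x y : V, x ≠ 0 → y ≠ 0 →
      angle x y ≤ C ^ 2 * Real.arccos (B x y / (√(B x x) * √(B y y))) := by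
  intro x y hx hy
  have hBxx : 0 < B x x := hBpos x hx
  have hByy : 0 < B y y := hBpos y hy
  set nx := √(B x x) with hnx
  set ny := √(B y y) with hny
  have hnx0 : 0 < nx := Real.sqrt_pos.2 hBxx
  have hny0 : 0 < ny := Real.sqrt_pos.2 hByy
  have hnx2 : nx ^ 2 = B x x := Real.sq_sqrt hBxx.le
  have hny2 : ny ^ 2 = B y y := Real.sq_sqrt hByy.le
  -- C ≥ 1
  have hC1 : 1 ≤ C := by
    have ha := h1 x
    have hb := h2 x
    have : C⁻¹ * nx ≤ C * nx := le_trans ha hb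
    have hcc : C⁻¹ ≤ C := le_of_mul_le_mul_right (by linarith) hnx0
    have h1c : 1 ≤ C * C := by
      calc (1:ℝ) = C * C⁻¹ := (mul_inv_cancel₀ hC.ne').symm
        _ ≤ C * C := mul_le_mul_of_nonneg_left hcc hC.le
    nlinarith [h1c, hC]
  have hC2 : 1 ≤ C ^ 2 := by nlinarith
  set c := B x y / (nx * ny) with hc
  -- |c| ≤ 1
  have hCS := aux_bilin_CS B hBsymm hBpos x y
  have hc1 : c ^ 2 ≤ 1 := by
    rw [hc, div_pow, mul_pow, hnx2, hny2]
    rw [div_le_one (by positivity)]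
    exact hCS
  have hcu : c ≤ 1 := by nlinarith
  have hcl : -1 ≤ c := by nlinarith
  set α := Real.arccos c with hα
  have hcosα : Real.cos α = c := Real.cos_arccos hcl hcu
  have hα0 : 0 ≤ α := Real.arccos_nonneg c
  have hαπ : α ≤ π := Real.arccos_le_pi c
  -- normalized vectors
  set u := nx⁻¹ • x with hu
  set v := ny⁻¹ • y with hv
  clear_value nx ny c α u v
  have hBuu : B u u = 1 := by
    simp only [hu, map_smul, LinearMap.smul_apply, smul_eq_mul]
    rw [← hnx2]; field_simp
  have hBvv : B v v = 1 := by
    simp only [hv, map_smul, LinearMap.smul_apply, smul_eq_mul]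
    rw [← hny2]; field_simp
  have hBuv : B u v = c := by
    simp only [hu, hv, map_smul, LinearMap.smul_apply, smul_eq_mul]
    rw [hc, div_eq_mul_inv, mul_inv]
    ring
  have hangle : angle x y = angle u v := by
    rw [hu, hv, angle_smul_left_of_pos _ _ (inv_pos.2 hnx0),
      angle_smul_right_of_pos _ _ (inv_pos.2 hny0)]
  have hu0 : u ≠ 0 := fun h => by rw [h] at hBuu; simp at hBuu
  have hv0 : v ≠ 0 := fun h => by rw [h] at hBvv; simp at hBvv
  rw [hangle]
  show angle u v ≤ C ^ 2 * α
  -- case α = 0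
  rcases eq_or_lt_of_le hα0 with h0 | h0
  · have hc1' : c = 1 := by rw [← hcosα, ← h0, Real.cos_zero]
    have : B (v - u) (v - u) = 0 := by
      simp only [map_sub, LinearMap.sub_apply]
      rw [hBvv, hBuu, hBuv, hBsymm v u, hBuv, hc1']; ring
    have hvu : v = u := by
      by_contra h
      exact absurd this (ne_of_gt (hBpos _ (sub_ne_zero.2 h)))
    rw [hvu, angle_self hu0, ← h0]
    positivity
  rcases eq_or_lt_of_le hαπ with hπ | hπ
  · -- α = π
    have hc1' : c = -1 := by rw [← hcosα, hπ, Real.cos_pi]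
    have : B (v + u) (v + u) = 0 := by
      simp only [map_add, LinearMap.add_apply]
      rw [hBvv, hBuu, hBuv, hBsymm v u, hBuv, hc1']; ring
    have hz : v + u = 0 := by
      by_contra h
      exact absurd this (ne_of_gt (hBpos _ h))
    have hvu : v = -u := eq_neg_of_add_eq_zero_left hz
    rw [hvu, angle_neg_right, angle_self hu0]
    rw [hπ]
    nlinarith [Real.pi_pos]
  -- main case 0 < α < π
  have hsinα : 0 < Real.sin α := Real.sin_pos_of_pos_of_lt_pi h0 hπ
  set w := (Real.sin α)⁻¹ • (v - c • u) with hw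
  have hsin2 : Real.sin α ^ 2 = 1 - c ^ 2 := by
    have := Real.sin_sq_add_cos_sq α
    rw [hcosα] at this; linarith
  have h13 : Real.sin α • w = v - c • u := by
    rw [hw, smul_smul, mul_inv_cancel₀ hsinα.ne', one_smul]
  have hBww : B w w = 1 := by
    have h14 : B (Real.sin α • w) (Real.sin α • w) = 1 - c ^ 2 := by
      rw [h13]
      simp only [map_sub, map_smul, LinearMap.sub_apply, LinearMap.smul_apply, smul_eq_mul]
      rw [hBvv, hBuu, hBuv, hBsymm v u, hBuv]; ring
    simp only [map_smul, LinearMap.smul_apply, smul_eq_mul] at h14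
    have h15 : Real.sin α ^ 2 * (B w w - 1) = 0 := by
      have hss : Real.sin α * (Real.sin α * B w w) = Real.sin α ^ 2 * B w w := by ring
      rw [hss] at h14
      linarith [h14, hsin2]
    rcases mul_eq_zero.1 h15 with h | h
    · exact absurd h (pow_ne_zero 2 hsinα.ne')
    · linarith
  have hBuw : B u w = 0 := by
    rw [hw]
    simp only [map_smul, map_sub, smul_eq_mul]
    rw [hBuv, hBuu]; ring
  have hvdecomp : v = c • u + Real.sin α • w := by
    rw [h13, add_sub_cancel]
  have hBP : ∀ s t : ℝ, B (Real.cos s • u + Real.sin s • w)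
      (Real.cos t • u + Real.sin t • w) = Real.cos (s - t) := by
    intro s t
    simp only [map_add, map_smul, LinearMap.add_apply, LinearMap.smul_apply, smul_eq_mul]
    rw [hBuu, hBww, hBuw, hBsymm w u, hBuw, Real.cos_sub]; ring
  -- limits
  have htend0 : Tendsto (fun n : ℕ => α / n) atTop (nhds 0) :=
    tendsto_const_div_atTop_nhds_zero_nat α
  have htsin : Tendsto (fun n : ℕ => C ^ 2 * Real.sin (α / n)) atTop (nhds 0) := by
    have h := (Real.continuous_sin.tendsto 0).comp htend0
    rw [Real.sin_zero] at h
    simpa using tendsto_const_nhds.mul h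
  have htcos : Tendsto (fun n : ℕ => C ^ 4 * (1 - Real.cos (α / n))) atTop (nhds 0) := by
    have h := (Real.continuous_cos.tendsto 0).comp htend0
    rw [Real.cos_zero] at h
    have h2 : Tendsto (fun n : ℕ => C ^ 4 * (1 - Real.cos (α / n))) atTop
        (nhds (C ^ 4 * (1 - 1))) := tendsto_const_nhds.mul (tendsto_const_nhds.sub h)
    simpa using h2
  have hev1 : ∀ᶠ n : ℕ in atTop, C ^ 4 * (1 - Real.cos (α / n)) < 1 :=
    htcos.eventually_lt_const one_pos
  have hev2 : ∀ᶠ n : ℕ in atTop, C ^ 2 * Real.sin (α / n) < 1 :=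
    htsin.eventually_lt_const one_pos
  have hev3 : ∀ᶠ n : ℕ in atTop, 1 ≤ n := eventually_ge_atTop 1
  have hbound : ∀ᶠ n : ℕ in atTop,
      angle u v ≤ C ^ 2 * α / √(1 - (C ^ 2 * Real.sin (α / n)) ^ 2) := by
    filter_upwards [hev1, hev2, hev3] with n hn1 hn2 hn3
    have hn0 : (1:ℝ) ≤ n := by exact_mod_cast hn3
    set θ := α / n with hθdef
    have hθ0 : 0 ≤ θ := div_nonneg hα0 (by linarith)
    have hθπ : θ ≤ π := (div_le_self hα0 hn0).trans hαπ
    have hsθ : 0 ≤ Real.sin θ := Real.sin_nonneg_of_nonneg_of_le_pi hθ0 hθπ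
    set P : ℕ → V := fun i => Real.cos (i * θ) • u + Real.sin (i * θ) • w with hPdef
    have hP0 : P 0 = u := by simp [hPdef]
    have hPn : P n = v := by
      have hnθ : (n:ℝ) * θ = α := by
        rw [hθdef]; field_simp
      simp only [hPdef, hnθ, hcosα]
      exact hvdecomp.symm
    have hchain : angle (P 0) (P n) ≤ ∑ i ∈ Finset.range n, angle (P i) (P (i + 1)) := by
      apply aux_angle_chain
      rw [hP0]; exact hu0
    have hseg : ∀ i : ℕ, angle (P i) (P (i + 1)) ≤ Real.arcsin (C ^ 2 * Real.sin θ) := by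
      intro i
      apply aux_seg hC B h1 h2 hθ0 hθπ _ _ _ hBsymm hn1
      · simp only [hPdef]
        rw [hBP, sub_self, Real.cos_zero]
      · simp only [hPdef]
        rw [hBP, sub_self, Real.cos_zero]
      · simp only [hPdef]
        rw [hBP]
        push_cast
        rw [show (i:ℝ) * θ - ((i:ℝ) + 1) * θ = -θ by ring, Real.cos_neg]
    have hsum : ∑ i ∈ Finset.range n, angle (P i) (P (i + 1))
        ≤ n * Real.arcsin (C ^ 2 * Real.sin θ) := by
      have := Finset.sum_le_card_nsmul (Finset.range n)
        (fun i => angle (P i) (P (i + 1))) (Real.arcsin (C ^ 2 * Real.sin θ))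
        (fun i _ => hseg i)
      simpa [nsmul_eq_mul] using this
    have hs0 : 0 ≤ C ^ 2 * Real.sin θ := by positivity
    have harc : Real.arcsin (C ^ 2 * Real.sin θ)
        ≤ C ^ 2 * Real.sin θ / √(1 - (C ^ 2 * Real.sin θ) ^ 2) :=
      aux_arcsin_le_div hs0 hn2
    have hden : 0 < √(1 - (C ^ 2 * Real.sin θ) ^ 2) := by
      apply Real.sqrt_pos.2; nlinarith [hs0, hn2]
    have hnum : (n:ℝ) * (C ^ 2 * Real.sin θ) ≤ C ^ 2 * α := by
      have hsle : Real.sin θ ≤ θ := Real.sin_le hθ0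
      have hnθ : (n:ℝ) * θ = α := by rw [hθdef]; field_simp
      calc (n:ℝ) * (C ^ 2 * Real.sin θ) = C ^ 2 * ((n:ℝ) * Real.sin θ) := by ring
        _ ≤ C ^ 2 * ((n:ℝ) * θ) := by
            apply mul_le_mul_of_nonneg_left _ (sq_nonneg C)
            exact mul_le_mul_of_nonneg_left hsle (by linarith)
        _ = C ^ 2 * α := by rw [hnθ]
    calc angle u v = angle (P 0) (P n) := by rw [hP0, hPn]
      _ ≤ ∑ i ∈ Finset.range n, angle (P i) (P (i + 1)) := hchain
      _ ≤ n * Real.arcsin (C ^ 2 * Real.sin θ) := hsum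
      _ ≤ n * (C ^ 2 * Real.sin θ / √(1 - (C ^ 2 * Real.sin θ) ^ 2)) := by
          apply mul_le_mul_of_nonneg_left harc (by positivity)
      _ = ((n:ℝ) * (C ^ 2 * Real.sin θ)) / √(1 - (C ^ 2 * Real.sin θ) ^ 2) := by ring
      _ ≤ C ^ 2 * α / √(1 - (C ^ 2 * Real.sin θ) ^ 2) := by
          gcongr
  have hlim : Tendsto (fun n : ℕ => C ^ 2 * α / √(1 - (C ^ 2 * Real.sin (α / n)) ^ 2))
      atTop (nhds (C ^ 2 * α)) := by
    have hsq : Tendsto (fun n : ℕ => (C ^ 2 * Real.sin (α / n)) ^ 2) atTop (nhds 0) := by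
      simpa using htsin.pow 2
    have h2 : Tendsto (fun n : ℕ => 1 - (C ^ 2 * Real.sin (α / n)) ^ 2) atTop (nhds 1) := by
      simpa using tendsto_const_nhds.sub hsq
    have hden : Tendsto (fun n : ℕ => √(1 - (C ^ 2 * Real.sin (α / n)) ^ 2)) atTop (nhds 1) := by
      have := (Real.continuous_sqrt.tendsto 1).comp h2
      rw [Real.sqrt_one] at this; exact this
    have hdd := (tendsto_const_nhds (x := C ^ 2 * α)).div hden one_ne_zero
    rw [div_one] at hdd; exact hdd
  exact ge_of_tendsto hlim hbound


end Seg


/-- If two inner-product norms on a finite-dimensional real vector space are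
`C`-Lipschitz-equivalent, then the induced angular distances on the sphere are
`C²`-Lipschitz-equivalent. -/
theorem angular_distances_lipschitz_equivalent
    (E : Type*) [AddCommGroup E] [Module ℝ E] [FiniteDimensional ℝ E]
    (B B' : LinearMap.BilinForm ℝ E)
    (hBsymm : ∀ x y, B x y = B y x) (hB'symm : ∀ x y, B' x y = B' y x)
    (hBpos : ∀ x : E, x ≠ 0 → 0 < B x x) (hB'pos : ∀ x : E, x ≠ 0 → 0 < B' x x)
    (C : ℝ) (hC : 0 < C)
    (hlip : ∀ x : E, C⁻¹ * Real.sqrt (B x x) ≤ Real.sqrt (B' x x) ∧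
      Real.sqrt (B' x x) ≤ C * Real.sqrt (B x x)) :
    ∀ x y : E, x ≠ 0 → y ≠ 0 →
      Real.arccos (B' x y / (Real.sqrt (B' x x) * Real.sqrt (B' y y)))
        ≤ C ^ 2 * Real.arccos (B x y / (Real.sqrt (B x x) * Real.sqrt (B y y))) := by
  have hB'nn : ∀ z : E, 0 ≤ B' z z := aux_bilin_nonneg B' hB'pos
  let cI : InnerProductSpace.Core ℝ E :=
  { inner := fun a b => B' a b
    conj_inner_symm := fun a b => by simpa using hB'symm b a
    re_inner_nonneg := fun a => by simpa using hB'nn a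
    definite := fun a ha => by
      by_contra h
      exact absurd ha (ne_of_gt (hB'pos a h))
    add_left := fun a b d => by simp [map_add, LinearMap.add_apply]
    smul_left := fun a b r => by simp [map_smul, LinearMap.smul_apply] }
  letI : NormedAddCommGroup E := cI.toNormedAddCommGroup
  letI : InnerProductSpace ℝ E := InnerProductSpace.ofCore cI.toCore
  have hinner : ∀ a b : E, (inner ℝ a b : ℝ) = B' a b := fun a b => rfl
  have hnorm : ∀ a : E, ‖a‖ = Real.sqrt (B' a a) := fun a => by
    rw [norm_eq_sqrt_real_inner, hinner]
  intro x y hx hy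
  have h1 : ∀ z : E, C⁻¹ * Real.sqrt (B z z) ≤ ‖z‖ := fun z => by
    rw [hnorm]; exact (hlip z).1
  have h2 : ∀ z : E, ‖z‖ ≤ C * Real.sqrt (B z z) := fun z => by
    rw [hnorm]; exact (hlip z).2
  have hmain := aux_main B hBsymm hBpos C hC h1 h2 x y hx hy
  have hangle : InnerProductGeometry.angle x y
      = Real.arccos (B' x y / (Real.sqrt (B' x x) * Real.sqrt (B' y y))) := by
    unfold InnerProductGeometry.angle
    rw [hinner, hnorm, hnorm]
  rw [← hangle]
  exact hmain
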